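/- Let n ≥ 1, let f : EuclideanSpace ℝ (Fin n) → ℝ be twice continuously differentiable, and let a : ℝ → ℝ be differentiable. Assume ‖∇f(x)‖² = a(f x) for all x. Let x₀ be a point with ∇f(x₀) ≠ 0, and define the unit normal field N(x) = ‖∇f(x)‖⁻¹ • ∇f(x) on the (open) set where ∇f ≠ 0. Then the derivative of N at x₀ in the direction N(x₀) vanishes: (fderiv ℝ N x₀)(N x₀) = 0. That is, N is a geodesic vector field: the integral curves of ∇f/‖∇f‖ are straight lines (unit-speed geodesics) in Euclidean space. -/

import Mathlib

open scoped RealInnerProductSpace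


/-- For an isoparametric-type function (`‖∇f‖² = a ∘ f`), the normalized gradient field
`N = ∇f/‖∇f‖` is a geodesic vector field: its derivative in its own direction vanishes,
so the integral curves of `N` are straight (unit-speed) lines in Euclidean space. -/
theorem normalized_gradient_geodesic {n : ℕ} (hn : 1 ≤ n)
    (f : EuclideanSpace ℝ (Fin n) → ℝ) (hf : ContDiff ℝ 2 f)
    (a : ℝ → ℝ) (ha : Differentiable ℝ a)
    (hiso : ∀ x, ‖gradient f x‖ ^ 2 = a (f x))
    (x₀ : EuclideanSpace ℝ (Fin n)) (hx₀ : gradient f x₀ ≠ 0)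
    (N : EuclideanSpace ℝ (Fin n) → EuclideanSpace ℝ (Fin n))
    (hN : ∀ x, N x = ‖gradient f x‖⁻¹ • gradient f x) :
    fderiv ℝ N x₀ (N x₀) = 0 := by
  classical
  -- gradient vs fderiv
  have hg_eq : ∀ (x v : EuclideanSpace ℝ (Fin n)), ⟪gradient f x, v⟫ = fderiv ℝ f x v := by
    intro x v
    simp [gradient, InnerProductSpace.toDual_symm_apply]
  -- second derivative
  have hf1 : ContDiff ℝ 1 (fderiv ℝ f) := hf.fderiv_right (by norm_num)
  set f'' := fderiv ℝ (fderiv ℝ f) x₀ with hf''def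
  have hf'' : HasFDerivAt (fderiv ℝ f) f'' x₀ :=
    ((hf1.differentiable (by norm_num)) x₀).hasFDerivAt
  have hsym : ∀ u v : EuclideanSpace ℝ (Fin n), f'' u v = f'' v u :=
    fun u v => hf.contDiffAt.isSymmSndFDerivAt (by norm_num) u v
  set T : StrongDual ℝ (EuclideanSpace ℝ (Fin n)) →L[ℝ] EuclideanSpace ℝ (Fin n) :=
    (InnerProductSpace.toDual ℝ (EuclideanSpace ℝ (Fin n))).symm.toContinuousLinearEquiv.toContinuousLinearMap with hT
  set G : EuclideanSpace ℝ (Fin n) →L[ℝ] EuclideanSpace ℝ (Fin n) := T.comp f'' with hGdef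
  have hgrad : HasFDerivAt (gradient f) G x₀ := T.hasFDerivAt.comp x₀ hf''
  have hGinner : ∀ u v : EuclideanSpace ℝ (Fin n), ⟪G u, v⟫ = f'' u v := by
    intro u v
    simp [hGdef, hT, InnerProductSpace.toDual_symm_apply]
  set g₀ : EuclideanSpace ℝ (Fin n) := gradient f x₀ with hg₀
  set Q : EuclideanSpace ℝ (Fin n) →L[ℝ] ℝ := (fderivInnerCLM ℝ (g₀, g₀)).comp (G.prod G) with hQdef
  have hq : HasFDerivAt (fun x => ⟪gradient f x, gradient f x⟫) Q x₀ :=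
    hgrad.inner ℝ hgrad
  have hfd : HasFDerivAt f (fderiv ℝ f x₀) x₀ :=
    ((hf.differentiable (by norm_num)) x₀).hasFDerivAt
  have haf : HasFDerivAt (fun x => a (f x))
      (deriv a (f x₀) • fderiv ℝ f x₀) x₀ :=
    ((ha (f x₀)).hasDerivAt).comp_hasFDerivAt x₀ hfd
  have heq : (fun x : EuclideanSpace ℝ (Fin n) => ⟪gradient f x, gradient f x⟫) = fun x => a (f x) := by
    funext x
    rw [real_inner_self_eq_norm_sq]
    exact hiso x
  have hQR : Q = deriv a (f x₀) • fderiv ℝ f x₀ := by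
    rw [heq] at hq
    exact hq.unique haf
  set c : ℝ := deriv a (f x₀) with hc
  have hkey : ∀ v : EuclideanSpace ℝ (Fin n), 2 * ⟪g₀, G v⟫ = c * ⟪g₀, v⟫ := by
    intro v
    have h := DFunLike.congr_fun hQR v
    simp only [hQdef, ContinuousLinearMap.comp_apply, ContinuousLinearMap.prod_apply,
      fderivInnerCLM_apply, ContinuousLinearMap.smul_apply, smul_eq_mul] at h
    rw [← hg_eq] at h
    have hcomm : ⟪G v, g₀⟫ = ⟪g₀, G v⟫ := real_inner_comm g₀ (G v)
    linarith [h, hcomm]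
  have hGg : G g₀ = (c / 2) • g₀ := by
    apply ext_inner_right ℝ
    intro v
    rw [real_inner_smul_left]
    have h1 : ⟪G g₀, v⟫ = ⟪g₀, G v⟫ := by
      rw [hGinner, hsym, ← hGinner, real_inner_comm]
    rw [h1]
    have := hkey v
    linarith
  set r : ℝ := ‖g₀‖ with hr
  have hrpos : 0 < r := norm_pos_iff.mpr hx₀
  have hrne : r ≠ 0 := ne_of_gt hrpos
  have hsq : Real.sqrt ⟪g₀, g₀⟫ = r := by
    rw [real_inner_self_eq_norm_sq, Real.sqrt_sq (norm_nonneg _)]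
  have hφ : HasDerivAt (fun t : ℝ => (Real.sqrt t)⁻¹) (-(1 / (2 * r)) / r ^ 2)
      (⟪g₀, g₀⟫) := by
    have h1 : HasDerivAt Real.sqrt (1 / (2 * r)) ⟪g₀, g₀⟫ := by
      have := Real.hasDerivAt_sqrt (x := ⟪g₀, g₀⟫)
        (by rw [real_inner_self_eq_norm_sq]; positivity)
      rwa [hsq] at this
    have := h1.inv (by rw [hsq]; exact hrne)
    rwa [hsq] at this
  set m : ℝ := -(1 / (2 * r)) / r ^ 2 with hm
  have hinv : HasFDerivAt (fun x : EuclideanSpace ℝ (Fin n) => ‖gradient f x‖⁻¹) (m • Q) x₀ := by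
    have h2 := hφ.comp_hasFDerivAt x₀ hq
    have h3 : ((fun t : ℝ => (Real.sqrt t)⁻¹) ∘ fun x : EuclideanSpace ℝ (Fin n) => ⟪gradient f x, gradient f x⟫)
        = fun x : EuclideanSpace ℝ (Fin n) => ‖gradient f x‖⁻¹ := by
      funext x
      simp only [Function.comp_apply]
      rw [real_inner_self_eq_norm_sq, Real.sqrt_sq (norm_nonneg _)]
    rwa [h3] at h2
  have hNfun : N = fun x => ‖gradient f x‖⁻¹ • gradient f x := funext hN
  set L : EuclideanSpace ℝ (Fin n) →L[ℝ] EuclideanSpace ℝ (Fin n) := r⁻¹ • G + (m • Q).smulRight g₀ with hL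
  have hNder : HasFDerivAt N L x₀ := by
    rw [hNfun]
    exact hinv.smul hgrad
  rw [hNder.fderiv, hN x₀]
  -- now compute
  have hGv : G (r⁻¹ • g₀) = (r⁻¹ * (c / 2)) • g₀ := by
    rw [map_smul, hGg, smul_smul]
  have hQv : Q (r⁻¹ • g₀) = c * r := by
    simp only [hQdef, ContinuousLinearMap.comp_apply, ContinuousLinearMap.prod_apply,
      fderivInnerCLM_apply]
    rw [hGv, real_inner_smul_right, real_inner_smul_left, real_inner_self_eq_norm_sq, ← hr]
    field_simp
    ring
  show L (r⁻¹ • g₀) = 0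
  simp only [hL, ContinuousLinearMap.add_apply, ContinuousLinearMap.smul_apply,
    ContinuousLinearMap.smulRight_apply, hGv, hQv, smul_smul, smul_eq_mul]
  rw [← add_smul]
  convert zero_smul ℝ g₀
  rw [hm]
  field_simp
  ring
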